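/- Let p be an admissible pattern of length n such that the sum of its coefficients is zero (bₙ = 0). A numerical semigroup S admits p if and only if the additive monoid generated by the integers b₁,…,bₙ is a subset of S. -/

import Mathlib

/-- A numerical semigroup: an additive submonoid of ℕ with finite complement. -/
def IsNumericalSemigroup (S : Set ℕ) : Prop :=
  0 ∈ S ∧ (∀ a ∈ S, ∀ b ∈ S, a + b ∈ S) ∧ Sᶜ.Finite

/-- Evaluation of a pattern (list of coefficients a₁,…,aₙ) at s₁,…,sₙ. -/
def patEval (p : List ℤ) (s : ℕ → ℕ) : ℤ :=
  ∑ i ∈ Finset.range p.length, p.getD i 0 * (s i : ℤ)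

/-- `S` admits the pattern `p`: p(s₁,…,sₙ) ∈ S for all s₁ ≥ ⋯ ≥ sₙ in S. -/
def AdmitsPat (S : Set ℕ) (p : List ℤ) : Prop :=
  ∀ s : ℕ → ℕ, (∀ i, s i ∈ S) → (∀ i j, i ≤ j → s j ≤ s i) →
    ∃ m ∈ S, (m : ℤ) = patEval p s

/-- A pattern is admissible if it is admitted by some numerical semigroup. -/
def Admissible (p : List ℤ) : Prop :=
  ∃ S : Set ℕ, IsNumericalSemigroup S ∧ AdmitsPat S p

/-- The derivative p' of a pattern. -/
def pderiv : List ℤ → List ℤ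
  | [] => []
  | a :: q => if a = 1 then q else (a - 1) :: q

/-- The admissibility degree: least k such that p⁽ᵏ⁾ is not admissible, or ∞. -/
noncomputable def adDeg (p : List ℤ) : ℕ∞ :=
  sInf ((fun m : ℕ => (m : ℕ∞)) '' {m : ℕ | ¬ Admissible (pderiv^[m] p)})

/-- The partial sum bᵢ = a₁ + ⋯ + aᵢ of the coefficients of `p`. -/
def psum (p : List ℤ) (i : ℕ) : ℤ :=
  ∑ j ∈ Finset.range i, p.getD j 0

/-- Let p be an admissible pattern whose coefficients sum to zero. A numerical
semigroup S admits p iff the additive monoid generated by b₁,…,bₙ is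
contained in S. -/

lemma psum_length (p : List ℤ) : psum p p.length = p.sum := by
  induction p with
  | nil => simp [psum]
  | cons a q ih =>
    simp only [psum, List.length_cons, Finset.sum_range_succ', List.getD_cons_succ,
      List.getD_cons_zero, List.sum_cons]
    rw [psum] at ih
    rw [ih]; ring

lemma patEval_eq (p : List ℤ) (hsum : p.sum = 0) (s : ℕ → ℕ) :
    patEval p s = ∑ i ∈ Finset.range p.length, psum p (i+1) * ((s i : ℤ) - s (i+1)) := by
  have key : ∀ i, psum p (i+1) * ((s i : ℤ) - s (i+1)) - p.getD i 0 * s i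
      = psum p i * s i - psum p (i+1) * s (i+1) := by
    intro i
    have h : psum p (i+1) = psum p i + p.getD i 0 := Finset.sum_range_succ _ i
    rw [h]; ring
  have h2 : ∑ i ∈ Finset.range p.length,
      (psum p (i+1) * ((s i : ℤ) - s (i+1)) - p.getD i 0 * s i)
      = psum p 0 * s 0 - psum p p.length * s p.length := by
    simp_rw [key]
    exact Finset.sum_range_sub' (fun i => psum p i * s i) p.length
  rw [Finset.sum_sub_distrib] at h2
  have h0 : psum p 0 = 0 := by simp [psum]
  rw [psum_length, hsum, h0] at h2
  unfold patEval
  linarith [h2]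

theorem stmt_4 (p : List ℤ) (hp : ∀ a ∈ p, a ≠ 0) (hadm : Admissible p)
    (hsum : p.sum = 0) (S : Set ℕ) (hS : IsNumericalSemigroup S) :
    AdmitsPat S p ↔
      ∀ x ∈ AddSubmonoid.closure
          {b : ℤ | ∃ i : ℕ, 1 ≤ i ∧ i ≤ p.length ∧ b = psum p i},
        ∃ m ∈ S, (m : ℤ) = x := by
  obtain ⟨h0S, haddS, hfin⟩ := hS
  obtain ⟨N, hN⟩ : ∃ N, ∀ n, N ≤ n → n ∈ S := by
    obtain ⟨M, hM⟩ := hfin.bddAbove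
    refine ⟨M + 1, fun n hn => ?_⟩
    by_contra h
    exact absurd (hM h) (by omega)
  constructor
  · intro hAdm x hx
    induction hx using AddSubmonoid.closure_induction with
    | mem b hb =>
      obtain ⟨i, hi1, hi2, rfl⟩ := hb
      set s : ℕ → ℕ := fun j => if j < i then N + 1 else N with hs
      have hsS : ∀ j, s j ∈ S := by
        intro j
        by_cases h : j < i
        · simpa [hs, h] using hN (N + 1) (by omega)
        · simpa [hs, h] using hN N le_rfl
      have hsmono : ∀ a b, a ≤ b → s b ≤ s a := by
        intro a b hab
        by_cases h1 : a < i <;> by_cases h2 : b < i <;>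
          simp only [hs, h1, h2, if_true, if_false] <;> omega
      obtain ⟨m, hmS, hm⟩ := hAdm s hsS hsmono
      refine ⟨m, hmS, ?_⟩
      rw [hm]
      have e1 : patEval p s = (∑ j ∈ Finset.range p.length, p.getD j 0) * N
          + ∑ j ∈ Finset.range p.length, (if j < i then p.getD j 0 else 0) := by
        unfold patEval
        rw [Finset.sum_mul, ← Finset.sum_add_distrib]
        apply Finset.sum_congr rfl
        intro j _
        by_cases h : j < i <;> simp only [hs, h, if_true, if_false] <;> push_cast <;> ring
      have e2 : (∑ j ∈ Finset.range p.length, p.getD j 0) = 0 := by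
        have := psum_length p
        rw [psum] at this
        rw [this, hsum]
      have e3 : ∑ j ∈ Finset.range p.length, (if j < i then p.getD j 0 else 0) = psum p i := by
        rw [psum]
        rw [← Finset.sum_subset (Finset.range_subset_range.2 hi2)
          (fun j _ hj' => if_neg (by simp only [Finset.mem_range] at hj'; omega))]
        apply Finset.sum_congr rfl
        intro j hj
        simp [Finset.mem_range.1 hj]
      rw [e1, e2, e3]; ring
    | zero => exact ⟨0, h0S, by simp⟩
    | add a b _ _ iha ihb =>
      obtain ⟨m1, hm1, he1⟩ := iha
      obtain ⟨m2, hm2, he2⟩ := ihb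
      exact ⟨m1 + m2, haddS _ hm1 _ hm2, by push_cast; rw [he1, he2]⟩
  · intro H s hsS hmono
    have hb : patEval p s ∈ AddSubmonoid.closure
        {b : ℤ | ∃ i : ℕ, 1 ≤ i ∧ i ≤ p.length ∧ b = psum p i} := by
      rw [patEval_eq p hsum s]
      apply AddSubmonoid.sum_mem
      intro i hi
      rw [Finset.mem_range] at hi
      have hle : s (i + 1) ≤ s i := hmono i (i + 1) (by omega)
      have hc : ((s i : ℤ) - s (i + 1)) = ((s i - s (i + 1) : ℕ) : ℤ) := by
        push_cast [hle]; ring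
      rw [hc, show psum p (i+1) * ((s i - s (i+1) : ℕ) : ℤ)
          = ((s i - s (i+1) : ℕ) • psum p (i+1) : ℤ) from by rw [nsmul_eq_mul]; ring]
      have hgen : psum p (i + 1) ∈ {b : ℤ | ∃ k : ℕ, 1 ≤ k ∧ k ≤ p.length ∧ b = psum p k} :=
        ⟨i + 1, by omega, by omega, rfl⟩
      exact nsmul_mem (AddSubmonoid.subset_closure hgen) _
    obtain ⟨m, hm, hme⟩ := H _ hb
    exact ⟨m, hm, hme⟩
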